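/- Let C = {x ∈ ℝⁿ : fᵢ(x) ≥ 0 for all i ∈ I} be a full-dimensional polyhedral cone given by a finite irredundant family of linear functionals (fᵢ)_{i∈I}, i.e. each Fᵢ = {x ∈ C : fᵢ(x) = 0} is a facet of C and no fᵢ is a nonnegative combination of the others. Let j, k ∈ I be distinct with F_j ≠ F_k. Then F_j and F_k are NOT adjacent (i.e. dim(F_j ∩ F_k) < n − 2) if and only if f_j(x) ≥ 0 for every x ∈ ℝⁿ satisfying fᵢ(x) ≥ 0 for all i ∈ I∖{j,k} and f_k(x) ≤ 0. -/

import Mathlib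

/-- A polyhedral cone in `ℝⁿ`: the solution set of finitely many
linear inequalities `fᵢ(x) ≥ 0`. -/
def IsPolyhedralCone {n : ℕ} (C : Set (Fin n → ℝ)) : Prop :=
  ∃ (m : ℕ) (f : Fin m → ((Fin n → ℝ) →ₗ[ℝ] ℝ)), C = {x | ∀ i, 0 ≤ f i x}

/-- `F` is a face of `C`: there is a linear functional nonnegative on `C`
whose zero set in `C` is `F`. -/
def IsFaceOf {n : ℕ} (C F : Set (Fin n → ℝ)) : Prop :=
  ∃ f : (Fin n → ℝ) →ₗ[ℝ] ℝ, (∀ x ∈ C, 0 ≤ f x) ∧ F = {x ∈ C | f x = 0}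

/-- The dimension of a face: the dimension of its linear span. -/
noncomputable def faceDim {n : ℕ} (F : Set (Fin n → ℝ)) : ℕ :=
  Module.finrank ℝ (Submodule.span ℝ F)

/-- A cone is salient (pointed) if `C ∩ (−C) = {0}`. -/
def IsSalient {n : ℕ} (C : Set (Fin n → ℝ)) : Prop :=
  ∀ x ∈ C, -x ∈ C → x = 0

open Module LinearMap Submodule


/-- A functional vanishing wherever both `fj` and `fk` vanish is a combination of them,
given "dual basis" vectors `w1, w2`. -/
lemma aux_two_ker {n : ℕ} (fj fk fi : (Fin n → ℝ) →ₗ[ℝ] ℝ)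
    (w1 w2 : Fin n → ℝ) (h11 : fj w1 = 1) (h12 : fk w1 = 0)
    (h21 : fj w2 = 0) (h22 : fk w2 = 1)
    (h : ∀ x, fj x = 0 → fk x = 0 → fi x = 0) :
    fi = fi w1 • fj + fi w2 • fk := by
  refine LinearMap.ext fun x => ?_
  have h0 : fi (x - fj x • w1 - fk x • w2) = 0 := by
    apply h
    · simp only [map_sub, map_smul, smul_eq_mul, h11, h21]; ring
    · simp only [map_sub, map_smul, smul_eq_mul, h12, h22]; ring
  simp only [map_sub, map_smul, smul_eq_mul] at h0
  show fi x = fi w1 * fj x + fi w2 * fk x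
  linarith

/-- On a segment from a point with positive value to a point with negative value there
is a zero. -/
lemma aux_seg {n : ℕ} (g : (Fin n → ℝ) →ₗ[ℝ] ℝ) (a b : Fin n → ℝ)
    (ha : 0 < g a) (hb : g b < 0) :
    ∃ s : ℝ, 0 < s ∧ s < 1 ∧ g ((1-s) • a + s • b) = 0 := by
  have hd : 0 < g a - g b := by linarith
  refine ⟨g a / (g a - g b), by positivity, ?_, ?_⟩
  · rw [div_lt_one hd]; linarith
  · rw [map_add, map_smul, map_smul, smul_eq_mul, smul_eq_mul]
    field_simp
    ring

set_option maxHeartbeats 1000000 in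
theorem facets_not_adjacent_iff_lp {n p : ℕ}
    (f : Fin p → ((Fin n → ℝ) →ₗ[ℝ] ℝ))
    (C : Set (Fin n → ℝ)) (hC : C = {x | ∀ i, 0 ≤ f i x})
    (hfull : Submodule.span ℝ C = ⊤)
    (F : Fin p → Set (Fin n → ℝ)) (hF : ∀ i, F i = {x ∈ C | f i x = 0})
    (hfacet : ∀ i, faceDim (F i) = n - 1)
    (hirred : ∀ i, ¬ ∃ mu : Fin p → ℝ, (∀ l, 0 ≤ mu l) ∧
      f i = ∑ l ∈ Finset.univ.erase i, mu l • f l)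
    (j k : Fin p) (hjk : j ≠ k) (hFjk : F j ≠ F k) :
    faceDim (F j ∩ F k) < n - 2 ↔
      ∀ x : Fin n → ℝ, (∀ i, i ≠ j → i ≠ k → 0 ≤ f i x) → f k x ≤ 0 →
        0 ≤ f j x := by
  -- dispose of n = 0
  rcases Nat.eq_zero_or_pos n with hn | hn
  · exfalso
    apply hFjk
    subst hn
    have hall : ∀ i x, f i x = 0 := by
      intro i x
      have : x = 0 := Subsingleton.elim x 0
      rw [this, map_zero]
    rw [hF j, hF k]
    ext x
    simp [hall]
  -- basic facts
  have hzeroC : (0 : Fin n → ℝ) ∈ C := by rw [hC]; intro i; simp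
  have haddC : ∀ x ∈ C, ∀ y ∈ C, x + y ∈ C := by
    rw [hC]; intro x hx y hy i
    have := hx i; have := hy i
    simp only [Set.mem_setOf_eq] at *
    rw [map_add]; linarith [hx i, hy i]
  have hFC : ∀ i, F i ⊆ C := by intro i; rw [hF i]; intro x hx; exact hx.1
  have hCge : ∀ x ∈ C, ∀ i, 0 ≤ f i x := by rw [hC]; intro x hx; exact hx
  -- each f i is nonzero
  have hne : ∀ i, f i ≠ 0 := by
    intro i h0
    have : F i = C := by rw [hF i]; ext x; simp [h0]
    have h1 : faceDim (F i) = n := by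
      rw [this]
      unfold faceDim
      rw [hfull, finrank_top, Module.finrank_fin_fun]
    rw [hfacet i] at h1
    omega
  -- each ker has finrank n-1
  have hkerrank : ∀ i, Module.finrank ℝ (LinearMap.ker (f i)) = n - 1 := by
    intro i
    have hsurj : Function.Surjective (f i) := by
      obtain ⟨u, hu⟩ : ∃ u, f i u ≠ 0 := by
        by_contra h
        push_neg at h
        exact hne i (by ext x; simp [h])
      intro c
      exact ⟨(c / f i u) • u, by rw [map_smul, smul_eq_mul]; field_simp⟩
    have := LinearMap.finrank_range_add_finrank_ker (f i)
    rw [LinearMap.range_eq_top.mpr hsurj, finrank_top] at this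
    simp only [Module.finrank_self, Module.finrank_fin_fun] at this
    omega
  -- span of F i is ker f i
  have hspanF : ∀ i, Submodule.span ℝ (F i) = LinearMap.ker (f i) := by
    intro i
    have hle : Submodule.span ℝ (F i) ≤ LinearMap.ker (f i) := by
      apply Submodule.span_le.mpr
      intro x hx
      rw [hF i] at hx
      exact LinearMap.mem_ker.mpr hx.2
    apply Submodule.eq_of_le_of_finrank_le hle
    rw [hkerrank i]
    exact le_of_eq (hfacet i).symm
  -- a point of C where f l is positive
  have hCpos : ∀ l, ∃ x₀ ∈ C, 0 < f l x₀ := by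
    intro l
    by_contra h
    push_neg at h
    have hsub : C ⊆ (LinearMap.ker (f l) : Set (Fin n → ℝ)) := by
      intro x hx
      have := hCge x hx l
      have := h x hx
      simp only [SetLike.mem_coe, LinearMap.mem_ker]
      linarith
    have : (⊤ : Submodule ℝ (Fin n → ℝ)) ≤ LinearMap.ker (f l) := by
      rw [← hfull]
      exact Submodule.span_le.mpr hsub
    have hk : LinearMap.ker (f l) = ⊤ := top_le_iff.mp this
    exact hne l (LinearMap.ker_eq_top.mp hk)
  -- irredundancy: no kernel inclusions
  have hker : ∀ i l, i ≠ l → ¬ (LinearMap.ker (f l) ≤ LinearMap.ker (f i)) := by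
    intro i l hil hle
    obtain ⟨u, hu⟩ : ∃ u, f l u ≠ 0 := by
      by_contra h
      push_neg at h
      exact hne l (LinearMap.ext fun x => by simp [h])
    set u' := (f l u)⁻¹ • u with hu'
    have hu'1 : f l u' = 1 := by rw [hu', map_smul, smul_eq_mul]; field_simp
    set c := f i u' with hc
    have hfi : f i = c • f l := by
      refine LinearMap.ext fun x => ?_
      have hmem : x - f l x • u' ∈ LinearMap.ker (f l) := by
        rw [LinearMap.mem_ker, map_sub, map_smul, hu'1, smul_eq_mul, mul_one, sub_self]
      have h2 := hle hmem
      rw [LinearMap.mem_ker, map_sub, map_smul, smul_eq_mul] at h2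
      rw [LinearMap.smul_apply, smul_eq_mul]
      linarith
    obtain ⟨x₀, hx₀C, hx₀⟩ := hCpos l
    have hcnn : 0 ≤ c := by
      have h1 := hCge x₀ hx₀C i
      rw [hfi, LinearMap.smul_apply, smul_eq_mul] at h1
      nlinarith
    apply hirred i
    refine ⟨fun m => if m = l then c else 0, fun m => by dsimp only; split <;> simp [hcnn], ?_⟩
    rw [hfi, Finset.sum_eq_single l]
    · simp
    · intro b _ hbl
      simp [hbl]
    · intro hl
      exact absurd (Finset.mem_erase.mpr ⟨Ne.symm hil, Finset.mem_univ l⟩) hl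
  -- points of F l with positive i-th value
  have hKnotF : ∀ i l, i ≠ l → ∃ z ∈ F l, 0 < f i z := by
    intro i l hil
    by_contra h
    push_neg at h
    have hsub : F l ⊆ (LinearMap.ker (f i) : Set (Fin n → ℝ)) := by
      intro x hx
      have h1 := hCge x (hFC l hx) i
      have h2 := h x hx
      simp only [SetLike.mem_coe, LinearMap.mem_ker]
      linarith
    exact hker i l hil (by rw [← hspanF l]; exact Submodule.span_le.mpr hsub)
  -- relative interior points of facets
  have hrelint : ∀ l, ∃ y ∈ C, f l y = 0 ∧ ∀ i, i ≠ l → 0 < f i y := by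
    intro l
    have hex : ∀ i : Fin p, ∃ z, z ∈ C ∧ f l z = 0 ∧ (i ≠ l → 0 < f i z) := by
      intro i
      by_cases hil : i = l
      · exact ⟨0, hzeroC, map_zero _, fun h => absurd hil h⟩
      · obtain ⟨z, hzF, hz⟩ := hKnotF i l hil
        rw [hF l] at hzF
        exact ⟨z, hzF.1, hzF.2, fun _ => hz⟩
    choose g hg1 hg2 hg3 using hex
    refine ⟨∑ i, g i, ?_, ?_, ?_⟩
    · rw [hC]
      intro m
      rw [map_sum]
      exact Finset.sum_nonneg fun i _ => hCge _ (hg1 i) m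
    · rw [map_sum]
      exact Finset.sum_eq_zero fun i _ => hg2 i
    · intro i hil
      rw [map_sum]
      exact Finset.sum_pos' (fun m _ => hCge _ (hg1 m) i)
        ⟨i, Finset.mem_univ i, hg3 i hil⟩
  -- scaling lemma
  have hM : ∀ z v : Fin n → ℝ, (∀ i, i ≠ j → i ≠ k → 0 < f i z) →
      ∃ M : ℝ, 0 ≤ M ∧ ∀ i, i ≠ j → i ≠ k → 0 < f i (M • z + v) := by
    classical
    intro z v hz
    set M : ℝ := 1 + ∑ i, (if i ≠ j ∧ i ≠ k then |f i v| / f i z else 0) with hMdef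
    have hterm : ∀ i, 0 ≤ (if i ≠ j ∧ i ≠ k then |f i v| / f i z else 0) := by
      intro i
      split
      · next h => exact div_nonneg (abs_nonneg _) (le_of_lt (hz i h.1 h.2))
      · exact le_refl 0
    have hM0 : 0 ≤ M := by
      have := Finset.sum_nonneg (fun i (_ : i ∈ Finset.univ) => hterm i)
      rw [hMdef]
      linarith
    refine ⟨M, hM0, fun i hij hik => ?_⟩
    have hiz := hz i hij hik
    have hle1 : |f i v| / f i z + 1 ≤ M := by
      have h2 := Finset.single_le_sum (fun m (_ : m ∈ Finset.univ) => hterm m) (Finset.mem_univ i)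
      rw [if_pos ⟨hij, hik⟩] at h2
      rw [hMdef]
      linarith
    have hle2 : (|f i v| / f i z + 1) * f i z ≤ M * f i z :=
      mul_le_mul_of_nonneg_right hle1 hiz.le
    have hexp : (|f i v| / f i z + 1) * f i z = |f i v| + f i z := by
      field_simp
    rw [hexp] at hle2
    rw [map_add, map_smul, smul_eq_mul]
    have h6 := neg_abs_le (f i v)
    linarith
  -- dual basis vectors
  obtain ⟨w1, hw11, hw12⟩ : ∃ w1, f j w1 = 1 ∧ f k w1 = 0 := by
    obtain ⟨u, huk, huj⟩ := SetLike.not_le_iff_exists.mp (hker j k hjk)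
    rw [LinearMap.mem_ker] at huk
    rw [LinearMap.mem_ker] at huj
    refine ⟨(f j u)⁻¹ • u, ?_, ?_⟩
    · rw [map_smul, smul_eq_mul]; field_simp
    · rw [map_smul, smul_eq_mul, huk, mul_zero]
  obtain ⟨w2, hw21, hw22⟩ : ∃ w2, f j w2 = 0 ∧ f k w2 = 1 := by
    obtain ⟨u, huj, huk⟩ := SetLike.not_le_iff_exists.mp (hker k j (Ne.symm hjk))
    rw [LinearMap.mem_ker] at huj
    rw [LinearMap.mem_ker] at huk
    refine ⟨(f k u)⁻¹ • u, ?_, ?_⟩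
    · rw [map_smul, smul_eq_mul, huj, mul_zero]
    · rw [map_smul, smul_eq_mul]; field_simp
  -- the intersection closed under the cone ops
  have hG : ∀ z, (∀ i, i ≠ j → i ≠ k → 0 ≤ f i z) → f j z = 0 → f k z = 0 →
      z ∈ F j ∩ F k := by
    intro z h1 h2 h3
    have hzC : z ∈ C := by
      rw [hC]
      intro i
      by_cases hij : i = j
      · rw [hij, h2]
      · by_cases hik : i = k
        · rw [hik, h3]
        · exact h1 i hij hik
    exact ⟨by rw [hF j]; exact ⟨hzC, h2⟩, by rw [hF k]; exact ⟨hzC, h3⟩⟩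
  -- key: from an interior ridge point, span of the ridge is the whole n-2 space
  constructor
  · -- not adjacent → LP condition
    intro hdim x hx hkx
    by_contra hjx
    push_neg at hjx
    obtain ⟨y, hyC, hyk, hy⟩ := hrelint k
    obtain ⟨w, hwC, hwj, hw⟩ := hrelint j
    have hyj : 0 < f j y := hy j hjk
    obtain ⟨s, hs0, hs1, hsz⟩ := aux_seg (f j) y x hyj hjx
    set z₀ := (1 - s) • y + s • x with hz₀
    have hkz₀ : f k z₀ ≤ 0 := by
      rw [hz₀, map_add, map_smul, map_smul, hyk, smul_eq_mul, smul_eq_mul]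
      nlinarith
    have hiz₀ : ∀ i, i ≠ j → i ≠ k → 0 < f i z₀ := by
      intro i hij hik
      rw [hz₀, map_add, map_smul, map_smul, smul_eq_mul, smul_eq_mul]
      have h1 := hy i hik
      have h2 := hx i hij hik
      nlinarith
    obtain ⟨z, hzj, hzk, hzi⟩ : ∃ z, f j z = 0 ∧ f k z = 0 ∧
        ∀ i, i ≠ j → i ≠ k → 0 < f i z := by
      rcases eq_or_lt_of_le hkz₀ with heq | hlt
      · exact ⟨z₀, hsz, heq, hiz₀⟩
      · have hwk : 0 < f k w := hw k (Ne.symm hjk)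
        obtain ⟨t, ht0, ht1, htz⟩ := aux_seg (f k) w z₀ hwk hlt
        refine ⟨(1 - t) • w + t • z₀, ?_, htz, ?_⟩
        · rw [map_add, map_smul, map_smul, hwj, hsz, smul_eq_mul, smul_eq_mul]
          ring
        · intro i hij hik
          rw [map_add, map_smul, map_smul, smul_eq_mul, smul_eq_mul]
          have h1 := hw i hij
          have h2 := hiz₀ i hij hik
          nlinarith
    have hzmem : z ∈ F j ∩ F k := hG z (fun i hij hik => (hzi i hij hik).le) hzj hzk
    have hKle : LinearMap.ker (f j) ⊓ LinearMap.ker (f k) ≤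
        Submodule.span ℝ (F j ∩ F k) := by
      intro u hu
      obtain ⟨huj, huk⟩ := Submodule.mem_inf.mp hu
      rw [LinearMap.mem_ker] at huj
      rw [LinearMap.mem_ker] at huk
      obtain ⟨M, hM0, hMall⟩ := hM z u hzi
      have h1 : M • z + u ∈ F j ∩ F k := by
        apply hG
        · exact fun i hij hik => (hMall i hij hik).le
        · rw [map_add, map_smul, hzj, huj, smul_eq_mul, mul_zero, add_zero]
        · rw [map_add, map_smul, hzk, huk, smul_eq_mul, mul_zero, add_zero]
      have h2 : u = (M • z + u) - M • z := by
        rw [add_sub_cancel_left]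
      rw [h2]
      exact Submodule.sub_mem _ (Submodule.subset_span h1)
        (Submodule.smul_mem _ M (Submodule.subset_span hzmem))
    have hrank : n - 2 ≤ faceDim (F j ∩ F k) := by
      have h1 := Submodule.finrank_mono hKle
      have h2 := Submodule.finrank_sup_add_finrank_inf_eq
        (LinearMap.ker (f j)) (LinearMap.ker (f k))
      have h3 : Module.finrank ℝ ↥(LinearMap.ker (f j) ⊔ LinearMap.ker (f k)) ≤ n := by
        have h4 := Submodule.finrank_le (LinearMap.ker (f j) ⊔ LinearMap.ker (f k))
        rwa [Module.finrank_fin_fun] at h4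
      have h4 := hkerrank j
      have h5 := hkerrank k
      unfold faceDim
      omega
    omega
  · -- LP condition → not adjacent
    intro hLP
    by_contra hge
    push_neg at hge
    have hspanle : Submodule.span ℝ (F j ∩ F k) ≤
        LinearMap.ker (f j) ⊓ LinearMap.ker (f k) := by
      apply Submodule.span_le.mpr
      intro x hx
      obtain ⟨h1, h2⟩ := hx
      rw [hF j] at h1
      rw [hF k] at h2
      exact Submodule.mem_inf.mpr ⟨LinearMap.mem_ker.mpr h1.2, LinearMap.mem_ker.mpr h2.2⟩
    have hKlt : LinearMap.ker (f j) ⊓ LinearMap.ker (f k) < LinearMap.ker (f j) := by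
      refine lt_of_le_of_ne inf_le_left (fun h => ?_)
      have h1 : w2 ∈ LinearMap.ker (f j) ⊓ LinearMap.ker (f k) := by
        rw [h]
        exact LinearMap.mem_ker.mpr hw21
      have h2 := (Submodule.mem_inf.mp h1).2
      rw [LinearMap.mem_ker, hw22] at h2
      exact one_ne_zero h2
    have hKrank : Module.finrank ℝ ↥(LinearMap.ker (f j) ⊓ LinearMap.ker (f k)) ≤ n - 2 := by
      have h1 := Submodule.finrank_lt_finrank_of_lt hKlt
      have h2 := hkerrank j
      omega
    have hspaneq : Submodule.span ℝ (F j ∩ F k) =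
        LinearMap.ker (f j) ⊓ LinearMap.ker (f k) := by
      apply Submodule.eq_of_le_of_finrank_le hspanle
      unfold faceDim at hge
      omega
    have hGi : ∀ i, i ≠ j → i ≠ k → ∃ z ∈ F j ∩ F k, 0 < f i z := by
      intro i hij hik
      by_contra h
      push_neg at h
      have hsub : F j ∩ F k ⊆ (LinearMap.ker (f i) : Set (Fin n → ℝ)) := by
        intro x hx
        have h1 := hCge x (hFC j hx.1) i
        have h2 := h x hx
        exact LinearMap.mem_ker.mpr (le_antisymm h2 h1)
      have hKle : LinearMap.ker (f j) ⊓ LinearMap.ker (f k) ≤ LinearMap.ker (f i) := by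
        rw [← hspaneq]
        exact Submodule.span_le.mpr hsub
      have hcomb : f i = f i w1 • f j + f i w2 • f k := by
        apply aux_two_ker _ _ _ w1 w2 hw11 hw12 hw21 hw22
        intro x hxj hxk
        exact LinearMap.mem_ker.mp (hKle (Submodule.mem_inf.mpr
          ⟨LinearMap.mem_ker.mpr hxj, LinearMap.mem_ker.mpr hxk⟩))
      obtain ⟨y', hy'F, hy'⟩ := hKnotF k j (Ne.symm hjk)
      obtain ⟨y'', hy''F, hy''⟩ := hKnotF j k hjk
      have hy'j : f j y' = 0 := by rw [hF j] at hy'F; exact hy'F.2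
      have hy''k : f k y'' = 0 := by rw [hF k] at hy''F; exact hy''F.2
      have hb : 0 ≤ f i w2 := by
        have h1 := hCge y' (hFC j hy'F) i
        rw [hcomb, LinearMap.add_apply, LinearMap.smul_apply, LinearMap.smul_apply,
          smul_eq_mul, smul_eq_mul, hy'j] at h1
        nlinarith
      have ha : 0 ≤ f i w1 := by
        have h1 := hCge y'' (hFC k hy''F) i
        rw [hcomb, LinearMap.add_apply, LinearMap.smul_apply, LinearMap.smul_apply,
          smul_eq_mul, smul_eq_mul, hy''k] at h1
        nlinarith
      apply hirred i
      refine ⟨fun m => if m = j then f i w1 else if m = k then f i w2 else 0, ?_, ?_⟩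
      · intro m
        dsimp only
        split
        · exact ha
        · split
          · exact hb
          · exact le_refl 0
      · have hsplit : ∀ m, (if m = j then f i w1 else if m = k then f i w2 else 0) • f m
            = (if m = j then f i w1 • f j else 0) + (if m = k then f i w2 • f k else 0) := by
          intro m
          by_cases h1 : m = j
          · subst h1
            rw [if_pos rfl, if_pos rfl, if_neg hjk, add_zero]
          · by_cases h2 : m = k
            · subst h2
              rw [if_neg h1, if_pos rfl, if_neg h1, if_pos rfl, zero_add]
            · rw [if_neg h1, if_neg h2, if_neg h1, if_neg h2, zero_smul, add_zero]
        have hsum : ∑ l ∈ Finset.univ.erase i,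
            (if l = j then f i w1 else if l = k then f i w2 else 0) • f l
            = f i w1 • f j + f i w2 • f k := by
          rw [Finset.sum_congr rfl (fun m _ => hsplit m), Finset.sum_add_distrib,
            Finset.sum_ite_eq' _ j _, Finset.sum_ite_eq' _ k _,
            if_pos (Finset.mem_erase.mpr ⟨Ne.symm hij, Finset.mem_univ j⟩),
            if_pos (Finset.mem_erase.mpr ⟨Ne.symm hik, Finset.mem_univ k⟩)]
        exact hcomb.trans hsum.symm
    have hex : ∀ i : Fin p, ∃ z, z ∈ F j ∩ F k ∧ (i ≠ j → i ≠ k → 0 < f i z) := by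
      intro i
      by_cases hij : i = j
      · exact ⟨0, hG 0 (fun m _ _ => by rw [map_zero]) (map_zero _) (map_zero _),
          fun h => absurd hij h⟩
      by_cases hik : i = k
      · exact ⟨0, hG 0 (fun m _ _ => by rw [map_zero]) (map_zero _) (map_zero _),
          fun _ h => absurd hik h⟩
      obtain ⟨z, hz1, hz2⟩ := hGi i hij hik
      exact ⟨z, hz1, fun _ _ => hz2⟩
    choose g hg1 hg2 using hex
    set z := ∑ i, g i with hzdef
    have hgj : ∀ i, f j (g i) = 0 := by
      intro i
      have h1 := (hg1 i).1
      rw [hF j] at h1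
      exact h1.2
    have hgk : ∀ i, f k (g i) = 0 := by
      intro i
      have h1 := (hg1 i).2
      rw [hF k] at h1
      exact h1.2
    have hgC : ∀ i, g i ∈ C := fun i => hFC j (hg1 i).1
    have hzj : f j z = 0 := by
      rw [hzdef, map_sum]
      exact Finset.sum_eq_zero fun i _ => hgj i
    have hzk : f k z = 0 := by
      rw [hzdef, map_sum]
      exact Finset.sum_eq_zero fun i _ => hgk i
    have hzi : ∀ i, i ≠ j → i ≠ k → 0 < f i z := by
      intro i hij hik
      rw [hzdef, map_sum]
      exact Finset.sum_pos' (fun m _ => hCge _ (hgC m) i)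
        ⟨i, Finset.mem_univ i, hg2 i hij hik⟩
    obtain ⟨M, hM0, hMall⟩ := hM z (-w1) hzi
    have hfinal := hLP (M • z + -w1) (fun i hij hik => (hMall i hij hik).le) ?_
    · rw [map_add, map_smul, map_neg, hzj, hw11, smul_eq_mul, mul_zero, zero_add] at hfinal
      linarith
    · rw [map_add, map_smul, map_neg, hzk, hw12, smul_eq_mul, mul_zero, neg_zero, add_zero]
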